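/- Let q ≥ 1, let Σ be a symmetric positive definite q×q real matrix, let c > 0, let Ω = c·Σ^{-1}, and let d ∈ ℝ^q with d ≠ 0. Then the sandwich variance with weighting matrix W = Σ attains the efficiency lower bound: (dᵀ Σ Ω Σ d)/(dᵀ Σ d)² = 1/(dᵀ Ω^{-1} d). -/

import Mathlib

open Matrix

/-- When `Ω = c·Σ⁻¹` with `c > 0` and `Σ` symmetric positive
definite, the sandwich variance with weighting matrix `W = Σ` attains the
efficiency lower bound: `(dᵀΣΩΣd)/(dᵀΣd)² = 1/(dᵀΩ⁻¹d)`. -/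
theorem tstsls_efficient_when_homogeneous
    (q : ℕ) (hq : 1 ≤ q)
    (S : Matrix (Fin q) (Fin q) ℝ)
    (hSsymm : S.IsSymm) (hSpd : S.PosDef)
    (c : ℝ) (hc : 0 < c)
    (Ω : Matrix (Fin q) (Fin q) ℝ) (hΩ : Ω = c • S⁻¹)
    (d : Fin q → ℝ) (hd : d ≠ 0) :
    (d ⬝ᵥ (S * Ω * S).mulVec d) / (d ⬝ᵥ S.mulVec d) ^ 2 =
      1 / (d ⬝ᵥ Ω⁻¹.mulVec d) := by
  have hdet : IsUnit S.det := isUnit_iff_ne_zero.mpr hSpd.det_pos.ne'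
  have hSS : S * Ω * S = c • S := by
    rw [hΩ, Matrix.mul_smul, Matrix.smul_mul, Matrix.mul_nonsing_inv _ hdet,
      Matrix.one_mul]
  have hΩinv : Ω⁻¹ = c⁻¹ • S := by
    rw [hΩ]
    apply Matrix.inv_eq_right_inv
    rw [Matrix.mul_smul, Matrix.smul_mul, Matrix.nonsing_inv_mul _ hdet,
      smul_smul, inv_mul_cancel₀ hc.ne', one_smul]
  have ht : 0 < d ⬝ᵥ S.mulVec d := by
    have := (Matrix.posDef_iff_dotProduct_mulVec.mp hSpd).2 hd
    simpa using this
  rw [hSS, hΩinv, Matrix.smul_mulVec, Matrix.smul_mulVec,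
    dotProduct_smul, dotProduct_smul]
  field_simp
  rw [smul_eq_mul, smul_eq_mul, mul_mul_mul_comm, mul_one_div_cancel hc.ne', one_mul, sq]
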